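/- For every natural number N, the function c ↦ ∫_{−∞}^{∞} e^{−c·cosh y}·cosh y · dy − √(2π/c)·e^{−c}·Σ_{n=0}^{N} (−1)^n·((2n−1)!!)²/(n!·8^n·c^n)·(1 + (2n+1)/(2c)) is O(e^{−c}·c^{−N−3/2}) as c → +∞ along the reals. -/

import Mathlib

open MeasureTheory Asymptotics Filter

/-- The odd double factorial `(2n−1)!! = (2n)!/(2ⁿ·n!)`, with `(−1)!! = 1`. -/
noncomputable def oddDoubleFactorial (n : ℕ) : ℝ :=
  (Nat.factorial (2 * n) : ℝ) / (2 ^ n * (Nat.factorial n : ℝ))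


noncomputable def binomCoef (a : ℝ) (k : ℕ) : ℝ :=
  (-1)^k * (∏ i ∈ Finset.range k, (a + i)) / (Nat.factorial k)

noncomputable def binomSum (a : ℝ) (m : ℕ) (x : ℝ) : ℝ :=
  ∑ k ∈ Finset.range m, binomCoef a k * x ^ k

lemma binomCoef_zero (a : ℝ) : binomCoef a 0 = 1 := by simp [binomCoef]

lemma coef_succ (a : ℝ) (k : ℕ) :
    ((k:ℝ)+1) * binomCoef a (k+1) = -a * binomCoef (a+1) k := by
  unfold binomCoef
  rw [Finset.prod_range_succ']
  push_cast [Nat.factorial_succ]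
  have : ∏ i ∈ Finset.range k, (a + (↑i + 1)) = ∏ i ∈ Finset.range k, (a + 1 + ↑i) := by
    apply Finset.prod_congr rfl; intro i _; ring
  rw [this]
  have hk : ((k:ℝ)+1) ≠ 0 := by positivity
  field_simp
  ring

lemma abs_binomCoef (a : ℝ) (ha : 0 < a) (k : ℕ) :
    |binomCoef a k| = (∏ i ∈ Finset.range k, (a + i)) / (Nat.factorial k) := by
  unfold binomCoef
  rw [abs_div, abs_mul, abs_pow, abs_neg, abs_one, one_pow, one_mul, abs_of_nonneg, abs_of_nonneg]
  · positivity
  · apply Finset.prod_nonneg; intro i _; positivity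

lemma abs_coef_succ (a : ℝ) (ha : 0 < a) (k : ℕ) :
    ((k:ℝ)+1) * |binomCoef a (k+1)| = a * |binomCoef (a+1) k| := by
  have h := congrArg abs (coef_succ a k)
  rw [abs_mul, abs_mul, abs_neg, abs_of_pos ha, abs_of_pos (by positivity : (0:ℝ) < (k:ℝ)+1)] at h
  exact h

lemma binomSum_zero (a : ℝ) (m : ℕ) : binomSum a (m+1) 0 = 1 := by
  simp [binomSum, Finset.sum_range_succ', binomCoef_zero]

lemma binom_remainder : ∀ (m : ℕ) (a : ℝ), 0 < a → ∀ x : ℝ, 0 ≤ x →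
    |(1+x) ^ (-a) - binomSum a m x| ≤ |binomCoef a m| * x ^ m := by
  intro m
  induction m with
  | zero =>
    intro a ha x hx
    simp only [binomSum, Finset.range_zero, Finset.sum_empty, sub_zero, binomCoef_zero, pow_zero,
      mul_one]
    rw [abs_of_nonneg (Real.rpow_nonneg (by linarith) _), abs_one]
    exact Real.rpow_le_one_of_one_le_of_nonpos (by linarith) (by linarith)
  | succ m ih =>
    intro a ha x hx
    set F' : ℝ → ℝ := fun s => -a * ((1+s) ^ (-(a+1)) - binomSum (a+1) m s) with hF'
    have hderiv : ∀ s ∈ Set.uIcc (0:ℝ) x,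
        HasDerivAt (fun y => (1+y) ^ (-a) - binomSum a (m+1) y) (F' s) s := by
      intro s hs
      rw [Set.uIcc_of_le hx] at hs
      have h1s : (0:ℝ) < 1 + s := by linarith [hs.1]
      have h1 : HasDerivAt (fun y : ℝ => (1+y) ^ (-a)) (-a * (1+s) ^ (-a-1)) s := by
        have := (Real.hasDerivAt_rpow_const (p := -a) (Or.inl h1s.ne')).comp s
          ((hasDerivAt_id s).const_add 1)
        simpa [Function.comp_def] using this
      have h2 : HasDerivAt (fun y : ℝ => binomSum a (m+1) y)
          (∑ k ∈ Finset.range (m+1), binomCoef a k * ((k:ℝ) * s ^ (k-1))) s := by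
        apply HasDerivAt.fun_sum
        intro k _
        exact (hasDerivAt_pow k s).const_mul _
      have hsum : (∑ k ∈ Finset.range (m+1), binomCoef a k * ((k:ℝ) * s ^ (k-1)))
          = -a * binomSum (a+1) m s := by
        rw [Finset.sum_range_succ']
        simp only [Nat.cast_zero, zero_mul, mul_zero, add_zero]
        rw [binomSum, Finset.mul_sum]
        apply Finset.sum_congr rfl
        intro i _
        have h := coef_succ a i
        push_cast
        calc binomCoef a (i+1) * (((i:ℝ)+1) * s ^ i) = (((i:ℝ)+1) * binomCoef a (i+1)) * s ^ i := by
              ring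
          _ = -a * (binomCoef (a+1) i * s ^ i) := by rw [h]; ring
      have := h1.fun_sub h2
      rw [hsum] at this
      refine this.congr_deriv ?_
      rw [hF']
      ring_nf
    have hcontF' : ContinuousOn F' (Set.uIcc (0:ℝ) x) := by
      apply ContinuousOn.mul continuousOn_const
      apply ContinuousOn.sub
      · intro s hs
        rw [Set.uIcc_of_le hx] at hs
        have h1s : (0:ℝ) < 1 + s := by linarith [hs.1]
        exact ((Real.continuousAt_rpow_const _ _ (Or.inl h1s.ne')).comp
          (by fun_prop : ContinuousAt (fun y : ℝ => 1 + y) s)).continuousWithinAt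
      · exact (Continuous.continuousOn (by unfold binomSum; fun_prop))
    have hint : IntervalIntegrable F' volume 0 x := hcontF'.intervalIntegrable
    have hftc := intervalIntegral.integral_eq_sub_of_hasDerivAt hderiv hint
    have h0 : (1+(0:ℝ)) ^ (-a) - binomSum a (m+1) 0 = 0 := by
      simp [binomSum_zero, Real.one_rpow]
    rw [h0, sub_zero] at hftc
    rw [← hftc]
    have hboundfun : IntervalIntegrable (fun s : ℝ => a * |binomCoef (a+1) m| * s ^ m)
        volume 0 x := (Continuous.continuousOn (by continuity)).intervalIntegrable
    have hb : |∫ s in (0:ℝ)..x, F' s| ≤ a * |binomCoef (a+1) m| * (x ^ (m+1) / (m+1)) := by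
      have := intervalIntegral.norm_integral_le_of_norm_le (μ := volume) (a := (0:ℝ)) (b := x)
        (f := F') (g := fun s => a * |binomCoef (a+1) m| * s ^ m) hx ?_ hboundfun
      · rw [Real.norm_eq_abs] at this
        refine this.trans ?_
        rw [intervalIntegral.integral_const_mul, integral_pow, zero_pow (by omega), sub_zero]
      · refine Filter.Eventually.of_forall (fun s hs => ?_)
        have hs0 : 0 ≤ s := le_of_lt hs.1
        rw [Real.norm_eq_abs, hF']
        simp only [abs_mul, abs_neg, abs_of_pos ha]
        rw [mul_assoc]
        exact mul_le_mul_of_nonneg_left (ih (a+1) (by linarith) s hs0) ha.le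
    refine hb.trans ?_
    have key := abs_coef_succ a ha m
    have hm1 : (0:ℝ) < (m:ℝ) + 1 := by positivity
    rw [show a * |binomCoef (a+1) m| * (x ^ (m+1) / (m+1))
        = (((m:ℝ)+1) * |binomCoef a (m+1)|) * (x ^ (m+1) / (m+1)) by rw [← key]]
    rw [mul_comm ((m:ℝ)+1) _, mul_assoc]
    have : ((m:ℝ)+1) * (x^(m+1)/((m:ℝ)+1)) = x^(m+1) := by field_simp
    rw [this]

lemma oddD_succ (k : ℕ) :
    oddDoubleFactorial (k+1) = (2*(k:ℝ)+1) * oddDoubleFactorial k := by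
  unfold oddDoubleFactorial
  have h2 : 2*(k+1) = (2*k+1)+1 := by ring
  rw [h2, Nat.factorial_succ, Nat.factorial_succ, Nat.factorial_succ]
  push_cast
  have hk : (Nat.factorial k : ℝ) ≠ 0 := Nat.cast_ne_zero.mpr (Nat.factorial_ne_zero k)
  field_simp
  ring

lemma oddD_pos (k : ℕ) : 0 < oddDoubleFactorial k := by
  unfold oddDoubleFactorial
  positivity

lemma prod_half (k : ℕ) :
    ∏ i ∈ Finset.range k, ((1:ℝ)/2 + i) = oddDoubleFactorial k / 2^k := by
  induction k with
  | zero => simp [oddDoubleFactorial]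
  | succ k ih =>
    rw [Finset.prod_range_succ, ih, oddD_succ]
    push_cast
    field_simp
    ring

lemma coef_half (k : ℕ) :
    binomCoef (1/2) k = (-1)^k * oddDoubleFactorial k / (2^k * (Nat.factorial k : ℝ)) := by
  unfold binomCoef
  rw [prod_half]
  field_simp

lemma oddD_le (k : ℕ) : oddDoubleFactorial k ≤ 2^k * (Nat.factorial k : ℝ) := by
  induction k with
  | zero => simp [oddDoubleFactorial]
  | succ k ih =>
    rw [oddD_succ, pow_succ, Nat.factorial_succ]
    push_cast
    have h1 : (0:ℝ) < 2*(k:ℝ)+1 := by positivity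
    calc (2*(k:ℝ)+1) * oddDoubleFactorial k ≤ (2*(k:ℝ)+2) * (2^k * (Nat.factorial k : ℝ)) := by
          apply mul_le_mul (by linarith) ih (oddD_pos k).le (by positivity)
      _ = 2 ^ k * 2 * (((k:ℝ) + 1) * (Nat.factorial k : ℝ)) := by ring
  
lemma abs_coef_half_le_one (k : ℕ) : |binomCoef (1/2) k| ≤ 1 := by
  rw [coef_half, abs_div, abs_mul, abs_pow, abs_neg, abs_one, one_pow, one_mul,
    abs_of_pos (oddD_pos k), abs_of_pos (by positivity : (0:ℝ) < 2^k * (Nat.factorial k : ℝ))]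
  rw [div_le_one (by positivity)]
  exact oddD_le k

lemma Gamma_half_nat (k : ℕ) :
    Real.Gamma ((k:ℝ) + 1/2) = oddDoubleFactorial k * Real.sqrt Real.pi / 2^k := by
  induction k with
  | zero =>
    rw [show ((0:ℕ):ℝ) + 1/2 = 1/2 by norm_num, Real.Gamma_one_half_eq]
    simp [oddDoubleFactorial]
  | succ k ih =>
    have hne : (k:ℝ) + 1/2 ≠ 0 := by positivity
    have : ((k:ℕ)+1 : ℝ) + 1/2 = ((k:ℝ) + 1/2) + 1 := by push_cast; ring
    push_cast
    rw [this, Real.Gamma_add_one hne, ih, oddD_succ]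
    field_simp
    ring

noncomputable def phi (t : ℝ) : ℝ := (1+t) * (t+2) ^ (-(1/2) : ℝ)

noncomputable def bc (k : ℕ) : ℝ :=
  (Real.sqrt 2)⁻¹ * (binomCoef (1/2) k / 2^k +
    if k = 0 then 0 else binomCoef (1/2) (k-1) / 2^(k-1))

lemma phi_eq (t : ℝ) (ht : 0 ≤ t) :
    phi t = (Real.sqrt 2)⁻¹ * ((1 + t/2) ^ (-(1/2) : ℝ) + t * (1 + t/2) ^ (-(1/2) : ℝ)) := by
  unfold phi
  have h2 : t + 2 = 2 * (1 + t/2) := by ring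
  rw [h2, Real.mul_rpow (by norm_num) (by linarith)]
  have h3 : (2:ℝ) ^ (-(1/2) : ℝ) = (Real.sqrt 2)⁻¹ := by
    rw [Real.rpow_neg (by norm_num), Real.sqrt_eq_rpow]
  rw [h3]; ring

lemma bc_sum (N : ℕ) (t : ℝ) :
    ∑ k ∈ Finset.range (N+1), bc k * t^k
      = (Real.sqrt 2)⁻¹ * (binomSum (1/2) (N+1) (t/2) + t * binomSum (1/2) N (t/2)) := by
  unfold bc binomSum
  rw [mul_add, Finset.mul_sum, Finset.mul_sum]
  have : ∀ k, (Real.sqrt 2)⁻¹ * (binomCoef (1/2) k / 2^k +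
      if k = 0 then 0 else binomCoef (1/2) (k-1) / 2^(k-1)) * t^k
      = (Real.sqrt 2)⁻¹ * (binomCoef (1/2) k * (t/2)^k)
        + (Real.sqrt 2)⁻¹ * (if k = 0 then 0 else binomCoef (1/2) (k-1) / 2^(k-1)) * t^k := by
    intro k
    rw [div_pow]
    ring
  rw [Finset.sum_congr rfl (fun k _ => this k), Finset.sum_add_distrib]
  congr 1
  rw [Finset.sum_range_succ']
  simp only [if_pos rfl, if_true, mul_zero, zero_mul, add_zero, if_neg (Nat.succ_ne_zero _),
    Nat.add_sub_cancel, pow_zero, mul_one, eq_self_iff_true]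
  rw [Finset.mul_sum]
  apply Finset.sum_congr rfl
  intro i _
  rw [div_pow]
  ring

lemma phi_remainder (N : ℕ) (t : ℝ) (ht : 0 ≤ t) :
    |phi t - ∑ k ∈ Finset.range (N+1), bc k * t^k| ≤ 2 * t^(N+1) := by
  rw [phi_eq t ht, bc_sum N t]
  have hx : 0 ≤ t/2 := by linarith
  have h1 := binom_remainder (N+1) (1/2) (by norm_num) (t/2) hx
  have h2 := binom_remainder N (1/2) (by norm_num) (t/2) hx
  have e1 : |binomCoef (1/2) (N+1)| * (t/2)^(N+1) ≤ t^(N+1) := by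
    calc |binomCoef (1/2) (N+1)| * (t/2)^(N+1) ≤ 1 * (t/2)^(N+1) := by
          apply mul_le_mul_of_nonneg_right (abs_coef_half_le_one _) (by positivity)
      _ ≤ t^(N+1) := by
          rw [one_mul]
          apply pow_le_pow_left₀ (by positivity) (by linarith)
  have e2 : |binomCoef (1/2) N| * (t/2)^N ≤ t^N := by
    calc |binomCoef (1/2) N| * (t/2)^N ≤ 1 * (t/2)^N := by
          apply mul_le_mul_of_nonneg_right (abs_coef_half_le_one _) (by positivity)
      _ ≤ t^N := by
          rw [one_mul]
          apply pow_le_pow_left₀ (by positivity) (by linarith)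
  have hs2 : (Real.sqrt 2)⁻¹ ≤ 1 := by
    rw [inv_le_one_iff₀]
    right
    rw [show (1:ℝ) = Real.sqrt 1 by simp]
    exact Real.sqrt_le_sqrt (by norm_num)
  have hs2' : 0 ≤ (Real.sqrt 2)⁻¹ := by positivity
  have key : (Real.sqrt 2)⁻¹ * (((1 + t/2) ^ (-(1/2) : ℝ) + t * (1 + t/2) ^ (-(1/2) : ℝ))
      - (binomSum (1/2) (N+1) (t/2) + t * binomSum (1/2) N (t/2)))
      = (Real.sqrt 2)⁻¹ * (((1 + t/2) ^ (-(1/2) : ℝ) - binomSum (1/2) (N+1) (t/2))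
        + t * ((1 + t/2) ^ (-(1/2) : ℝ) - binomSum (1/2) N (t/2))) := by ring
  rw [← mul_sub, key, abs_mul, abs_of_nonneg hs2']
  calc (Real.sqrt 2)⁻¹ * |((1 + t/2) ^ (-(1/2) : ℝ) - binomSum (1/2) (N+1) (t/2))
        + t * ((1 + t/2) ^ (-(1/2) : ℝ) - binomSum (1/2) N (t/2))|
      ≤ 1 * (|(1 + t/2) ^ (-(1/2) : ℝ) - binomSum (1/2) (N+1) (t/2)|
          + t * |(1 + t/2) ^ (-(1/2) : ℝ) - binomSum (1/2) N (t/2)|) := by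
        refine mul_le_mul hs2 ?_ (abs_nonneg _) zero_le_one
        refine (abs_add_le _ _).trans ?_
        rw [abs_mul, abs_of_nonneg ht]
    _ ≤ t^(N+1) + t * t^N := by
        rw [one_mul]
        apply add_le_add (h1.trans e1)
        exact mul_le_mul_of_nonneg_left (h2.trans e2) ht
    _ = 2 * t^(N+1) := by ring

lemma integrable_rpow_exp {s c : ℝ} (hs : -1 < s) (hc : 0 < c) :
    IntegrableOn (fun t : ℝ => t ^ s * Real.exp (-(c*t))) (Set.Ioi 0) := by
  have h := integrableOn_rpow_mul_exp_neg_mul_rpow hs (zero_lt_one : (0:ℝ) < 1) hc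
  apply h.congr_fun _ measurableSet_Ioi
  intro x _
  simp [Real.rpow_one]

lemma gamma_value {c : ℝ} (hc : 0 < c) (k : ℕ) :
    ∫ t in Set.Ioi (0:ℝ), t ^ ((k:ℝ) - 1/2) * Real.exp (-(c*t))
      = (1/c) ^ ((k:ℝ) + 1/2) * Real.Gamma ((k:ℝ) + 1/2) := by
  have := Real.integral_rpow_mul_exp_neg_mul_Ioi (a := (k:ℝ) + 1/2) (r := c) (by positivity) hc
  rw [show (k:ℝ) + 1/2 - 1 = (k:ℝ) - 1/2 by ring] at this
  exact this

lemma rho_cont (N : ℕ) : ContinuousOn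
    (fun t : ℝ => phi t - ∑ k ∈ Finset.range (N+1), bc k * t^k) (Set.Ioi 0) := by
  apply ContinuousOn.sub
  · apply ContinuousOn.mul (by fun_prop)
    intro t ht
    have : (0:ℝ) < t + 2 := by have := Set.mem_Ioi.mp ht; linarith
    exact ((by fun_prop : ContinuousAt (fun y : ℝ => y + 2) t).rpow_const
      (Or.inl this.ne')).continuousWithinAt
  · exact Continuous.continuousOn (by continuity)

lemma watson (N : ℕ) {c : ℝ} (hc : 0 < c) :
    ∃ E : ℝ,
      (∫ t in Set.Ioi (0:ℝ), Real.exp (-(c*t)) * t ^ (-(1/2):ℝ) * phi t)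
        = (∑ k ∈ Finset.range (N+1),
            bc k * ((1/c) ^ ((k:ℝ) + 1/2) * Real.Gamma ((k:ℝ) + 1/2))) + E
      ∧ |E| ≤ 2 * ((1/c) ^ (((N+1:ℕ):ℝ) + 1/2) * Real.Gamma (((N+1:ℕ):ℝ) + 1/2)) := by
  set ρ : ℝ → ℝ := fun t => phi t - ∑ k ∈ Finset.range (N+1), bc k * t^k with hρ
  set f₂ : ℝ → ℝ := fun t => Real.exp (-(c*t)) * t ^ (-(1/2):ℝ) * ρ t with hf₂
  have hmain : ∀ k : ℕ, IntegrableOn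
      (fun t : ℝ => bc k * (t ^ ((k:ℝ) - 1/2) * Real.exp (-(c*t)))) (Set.Ioi 0) := by
    intro k
    exact (integrable_rpow_exp (by push_cast; linarith [Nat.cast_nonneg (α := ℝ) k]) hc).const_mul _
  have hbound : ∀ t ∈ Set.Ioi (0:ℝ),
      ‖f₂ t‖ ≤ 2 * (t ^ (((N+1:ℕ):ℝ) - 1/2) * Real.exp (-(c*t))) := by
    intro t ht
    have ht0 : (0:ℝ) < t := Set.mem_Ioi.mp ht
    rw [hf₂, Real.norm_eq_abs, abs_mul, abs_mul, abs_of_pos (Real.exp_pos _),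
      abs_of_pos (Real.rpow_pos_of_pos ht0 _)]
    have h1 : |ρ t| ≤ 2 * t^(N+1) := phi_remainder N t ht0.le
    calc Real.exp (-(c*t)) * t ^ (-(1/2):ℝ) * |ρ t|
        ≤ Real.exp (-(c*t)) * t ^ (-(1/2):ℝ) * (2 * t^(N+1)) := by
          apply mul_le_mul_of_nonneg_left h1 (by positivity)
      _ = 2 * (t ^ (((N+1:ℕ):ℝ) - 1/2) * Real.exp (-(c*t))) := by
          rw [show (((N+1:ℕ)):ℝ) - 1/2 = (((N+1:ℕ)):ℝ) + (-(1/2)) by ring,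
            Real.rpow_add ht0, Real.rpow_natCast]
          ring
  have hint2 : IntegrableOn f₂ (Set.Ioi 0) := by
    apply Integrable.mono'
      ((integrable_rpow_exp (s := ((N+1:ℕ):ℝ) - 1/2) (by push_cast; linarith [Nat.cast_nonneg (α := ℝ) N]) hc).const_mul 2)
    · apply ContinuousOn.aestronglyMeasurable _ measurableSet_Ioi
      apply ContinuousOn.mul (ContinuousOn.mul (by fun_prop) ?_) (rho_cont N)
      intro t ht
      have ht0 : (0:ℝ) < t := Set.mem_Ioi.mp ht
      exact (Real.continuousAt_rpow_const _ _ (Or.inl ht0.ne')).continuousWithinAt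
    · exact (ae_restrict_mem measurableSet_Ioi).mono hbound
  have hptwise : ∀ t ∈ Set.Ioi (0:ℝ),
      Real.exp (-(c*t)) * t ^ (-(1/2):ℝ) * phi t
        = (∑ k ∈ Finset.range (N+1), bc k * (t ^ ((k:ℝ) - 1/2) * Real.exp (-(c*t)))) + f₂ t := by
    intro t ht
    have ht0 : (0:ℝ) < t := Set.mem_Ioi.mp ht
    have hphi : phi t = (∑ k ∈ Finset.range (N+1), bc k * t^k) + ρ t := by rw [hρ]; ring
    rw [hf₂]
    simp only
    rw [hphi, mul_add, Finset.mul_sum]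
    congr 1
    apply Finset.sum_congr rfl
    intro k _
    rw [show ((k:ℝ)) - 1/2 = ((k:ℝ)) + (-(1/2)) by ring, Real.rpow_add ht0, Real.rpow_natCast]
    ring
  refine ⟨∫ t in Set.Ioi (0:ℝ), f₂ t, ?_, ?_⟩
  · rw [setIntegral_congr_fun measurableSet_Ioi hptwise, integral_add
      (integrable_finset_sum _ (fun k _ => hmain k)) hint2, integral_finset_sum _ (fun k _ => hmain k)]
    congr 1
    apply Finset.sum_congr rfl
    intro k _
    rw [MeasureTheory.integral_const_mul, gamma_value hc k]
  · have hg2 : IntegrableOn (fun t : ℝ => 2 * (t ^ (((N+1:ℕ):ℝ) - 1/2) * Real.exp (-(c*t)))) (Set.Ioi 0) :=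
      (integrable_rpow_exp (by push_cast; linarith [Nat.cast_nonneg (α := ℝ) N]) hc).const_mul 2
    have := norm_integral_le_of_norm_le hg2 ((ae_restrict_mem measurableSet_Ioi).mono hbound)
    rw [Real.norm_eq_abs] at this
    refine this.trans ?_
    rw [MeasureTheory.integral_const_mul, gamma_value hc (N+1)]

lemma cosh_image : (fun y : ℝ => Real.cosh y - 1) '' Set.Ioi 0 = Set.Ioi 0 := by
  apply Set.eq_of_subset_of_subset
  · rintro t ⟨y, hy, rfl⟩
    rw [Set.mem_Ioi] at hy
    have : 1 < Real.cosh y := Real.one_lt_cosh.mpr (ne_of_gt hy)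
    show (0:ℝ) < Real.cosh y - 1
    linarith
  · intro t ht
    rw [Set.mem_Ioi] at ht
    refine ⟨Real.arsinh (Real.sqrt (t^2 + 2*t)), ?_, ?_⟩
    · rw [Set.mem_Ioi, ← Real.arsinh_zero]
      apply Real.arsinh_lt_arsinh.mpr
      positivity
    · show Real.cosh (Real.arsinh (Real.sqrt (t^2 + 2*t))) - 1 = t
      rw [Real.cosh_arsinh, Real.sq_sqrt (by positivity)]
      rw [show 1 + (t^2 + 2*t) = (1+t)^2 by ring, Real.sqrt_sq (by linarith)]
      ring

lemma subst {c : ℝ} :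
    ∫ y in Set.Ioi (0:ℝ), Real.exp (-c * Real.cosh y) * Real.cosh y
      = ∫ t in Set.Ioi (0:ℝ),
          Real.exp (-c) * (Real.exp (-(c*t)) * t ^ (-(1/2):ℝ) * phi t) := by
  have hderiv : ∀ y ∈ Set.Ioi (0:ℝ),
      HasDerivWithinAt (fun y : ℝ => Real.cosh y - 1) (Real.sinh y) (Set.Ioi 0) y := by
    intro y _
    exact ((Real.hasDerivAt_cosh y).sub_const 1).hasDerivWithinAt
  have hinj : Set.InjOn (fun y : ℝ => Real.cosh y - 1) (Set.Ioi 0) := by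
    intro a ha b hb hab
    simp only [sub_left_inj] at hab
    exact (Real.cosh_strictMonoOn.injOn.mono (Set.Ioi_subset_Ici le_rfl)) ha hb hab
  have := integral_image_eq_integral_abs_deriv_smul measurableSet_Ioi hderiv hinj
    (fun t => Real.exp (-c) * (Real.exp (-(c*t)) * t ^ (-(1/2):ℝ) * phi t))
  rw [cosh_image] at this
  rw [this]
  apply setIntegral_congr_fun measurableSet_Ioi
  intro y hy
  have hy0 : (0:ℝ) < y := Set.mem_Ioi.mp hy
  have hsinh : 0 < Real.sinh y := Real.sinh_pos_iff.mpr hy0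
  have hch : 1 < Real.cosh y := Real.one_lt_cosh.mpr (ne_of_gt hy0)
  simp only [smul_eq_mul, abs_of_pos hsinh]
  have e1 : Real.exp (-c) * Real.exp (-(c * (Real.cosh y - 1))) = Real.exp (-c * Real.cosh y) := by
    rw [← Real.exp_add]
    congr 1
    ring
  have e2 : phi (Real.cosh y - 1) = Real.cosh y * (Real.cosh y + 1) ^ (-(1/2):ℝ) := by
    unfold phi
    rw [show 1 + (Real.cosh y - 1) = Real.cosh y by ring,
      show Real.cosh y - 1 + 2 = Real.cosh y + 1 by ring]
  have e3 : (Real.cosh y - 1) ^ (-(1/2):ℝ) * (Real.cosh y + 1) ^ (-(1/2):ℝ)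
      = (Real.sinh y)⁻¹ := by
    rw [← Real.mul_rpow (by linarith) (by linarith),
      show (Real.cosh y - 1) * (Real.cosh y + 1) = Real.cosh y ^ 2 - 1 by ring,
      Real.cosh_sq', show 1 + Real.sinh y ^ 2 - 1 = Real.sinh y ^ 2 by ring,
      Real.rpow_neg (by positivity), ← Real.sqrt_eq_rpow, Real.sqrt_sq hsinh.le]
  symm
  calc Real.sinh y * (Real.exp (-c) * (Real.exp (-(c * (Real.cosh y - 1)))
        * (Real.cosh y - 1) ^ (-(1/2):ℝ) * phi (Real.cosh y - 1)))
      = (Real.exp (-c) * Real.exp (-(c * (Real.cosh y - 1)))) * Real.cosh y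
        * (Real.sinh y * ((Real.cosh y - 1) ^ (-(1/2):ℝ) * (Real.cosh y + 1) ^ (-(1/2):ℝ))) := by
        rw [e2]; ring
    _ = Real.exp (-c * Real.cosh y) * Real.cosh y := by
        rw [e1, e3, mul_inv_cancel₀ (ne_of_gt hsinh), mul_one]

noncomputable def Acoef (n : ℕ) : ℝ :=
  (-1)^n * (oddDoubleFactorial n)^2 / ((Nat.factorial n : ℝ) * 8^n)

lemma sqrt2_ne : (Real.sqrt 2) ≠ 0 := by positivity

lemma inv_sqrt2 : (Real.sqrt 2)⁻¹ = Real.sqrt 2 / 2 := by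
  have h : Real.sqrt 2 * Real.sqrt 2 = 2 := Real.mul_self_sqrt (by norm_num)
  field_simp
  rw [Real.sq_sqrt (by norm_num)]

lemma term_id0 : 2 * bc 0 * Real.Gamma (((0:ℕ):ℝ) + 1/2)
    = Real.sqrt 2 * Real.sqrt Real.pi * Acoef 0 := by
  rw [Gamma_half_nat]
  unfold bc Acoef oddDoubleFactorial
  simp only [if_pos rfl, binomCoef_zero]
  rw [inv_sqrt2]
  norm_num [Nat.factorial]
  left
  ring

lemma term_id (j : ℕ) : 2 * bc (j+1) * Real.Gamma (((j+1:ℕ):ℝ) + 1/2)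
    = Real.sqrt 2 * Real.sqrt Real.pi *
      (Acoef (j+1) + Acoef j * (2*(j:ℝ)+1) / 2) := by
  rw [Gamma_half_nat]
  unfold bc Acoef
  rw [if_neg (Nat.succ_ne_zero j), Nat.add_sub_cancel, coef_half, coef_half, inv_sqrt2,
    oddD_succ j]
  have h8 : ∀ n : ℕ, (8:ℝ)^n = 2^n * 2^n * 2^n := by
    intro n; rw [← mul_pow, ← mul_pow]; norm_num
  have hfac : (Nat.factorial (j+1) : ℝ) = ((j:ℝ)+1) * (Nat.factorial j : ℝ) := by
    rw [Nat.factorial_succ]; push_cast; ring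
  rw [h8, h8, hfac]
  have h2j : (2:ℝ)^(j+1) = 2 * 2^j := by ring
  rw [h2j]
  have hjne : ((j:ℝ)+1) ≠ 0 := by positivity
  have hfne : (Nat.factorial j : ℝ) ≠ 0 := Nat.cast_ne_zero.mpr (Nat.factorial_ne_zero j)
  have h2ne : (2:ℝ)^j ≠ 0 := by positivity
  field_simp

lemma sum_id (N : ℕ) {c : ℝ} (hc : 0 < c) :
    Real.sqrt 2 * Real.sqrt Real.pi *
        ∑ n ∈ Finset.range (N+1), Acoef n / c^n * (1 + (2*(n:ℝ)+1)/(2*c))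
      = 2 * ∑ k ∈ Finset.range (N+1), bc k * (Real.Gamma ((k:ℝ)+1/2) * (1/c)^k)
        + Real.sqrt 2 * Real.sqrt Real.pi *
            (Acoef N * (2*(N:ℝ)+1) / (2 * c^(N+1))) := by
  have hcne : c ≠ 0 := hc.ne'
  have hterm : ∀ k : ℕ, 2 * bc k * Real.Gamma ((k:ℝ)+1/2)
      = Real.sqrt 2 * Real.sqrt Real.pi *
        (Acoef k + if k = 0 then 0 else Acoef (k-1) * (2*((k-1:ℕ):ℝ)+1) / 2) := by
    intro k
    cases k with
    | zero => simpa using term_id0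
    | succ j =>
      rw [if_neg (Nat.succ_ne_zero j), Nat.add_sub_cancel]
      have h := term_id j
      push_cast at h ⊢
      exact h
  have hsplit : ∑ n ∈ Finset.range (N+1), Acoef n / c^n * (1 + (2*(n:ℝ)+1)/(2*c))
      = (∑ n ∈ Finset.range (N+1), Acoef n / c^n)
        + ∑ n ∈ Finset.range (N+1), Acoef n * (2*(n:ℝ)+1) / (2*c^(n+1)) := by
    rw [← Finset.sum_add_distrib]
    apply Finset.sum_congr rfl
    intro n _
    have hpn : c^n ≠ 0 := pow_ne_zero _ hcne
    field_simp
    ring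
  have h2 : 2 * ∑ k ∈ Finset.range (N+1), bc k * (Real.Gamma ((k:ℝ)+1/2) * (1/c)^k)
      = Real.sqrt 2 * Real.sqrt Real.pi *
          ((∑ n ∈ Finset.range (N+1), Acoef n / c^n)
            + ((∑ n ∈ Finset.range (N+1), Acoef n * (2*(n:ℝ)+1) / (2*c^(n+1)))
                - Acoef N * (2*(N:ℝ)+1) / (2*c^(N+1)))) := by
    rw [Finset.mul_sum]
    have e1 : ∀ k ∈ Finset.range (N+1), 2 * (bc k * (Real.Gamma ((k:ℝ)+1/2) * (1/c)^k))
        = Real.sqrt 2 * Real.sqrt Real.pi * (Acoef k / c^k)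
          + Real.sqrt 2 * Real.sqrt Real.pi *
              ((if k = 0 then 0 else Acoef (k-1) * (2*((k-1:ℕ):ℝ)+1) / 2) * (1/c)^k) := by
      intro k _
      have h := hterm k
      calc 2 * (bc k * (Real.Gamma ((k:ℝ)+1/2) * (1/c)^k))
          = (2 * bc k * Real.Gamma ((k:ℝ)+1/2)) * (1/c)^k := by ring
        _ = (Real.sqrt 2 * Real.sqrt Real.pi *
              (Acoef k + if k = 0 then 0 else Acoef (k-1) * (2*((k-1:ℕ):ℝ)+1) / 2)) * (1/c)^k := by
            rw [h]
        _ = Real.sqrt 2 * Real.sqrt Real.pi * (Acoef k * (1/c)^k)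
            + Real.sqrt 2 * Real.sqrt Real.pi *
                ((if k = 0 then 0 else Acoef (k-1) * (2*((k-1:ℕ):ℝ)+1) / 2) * (1/c)^k) := by
            ring
        _ = Real.sqrt 2 * Real.sqrt Real.pi * (Acoef k / c^k)
            + Real.sqrt 2 * Real.sqrt Real.pi *
                ((if k = 0 then 0 else Acoef (k-1) * (2*((k-1:ℕ):ℝ)+1) / 2) * (1/c)^k) := by
            rw [div_pow, one_pow, mul_one_div]
    rw [Finset.sum_congr rfl e1, Finset.sum_add_distrib, ← Finset.mul_sum, ← Finset.mul_sum]
    rw [← mul_add]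
    congr 1
    congr 1
    rw [Finset.sum_range_succ']
    simp only [if_pos rfl, if_true, zero_mul, mul_zero, add_zero, if_neg (Nat.succ_ne_zero _),
      Nat.add_sub_cancel]
    rw [Finset.sum_range_succ, add_sub_cancel_right]
    apply Finset.sum_congr rfl
    intro j _
    rw [div_pow, one_pow]
    have : c ^ (j+1) ≠ 0 := pow_ne_zero _ hcne
    field_simp
  rw [hsplit, h2]
  ring

lemma even_step (c : ℝ) :
    (∫ y : ℝ, Real.exp (-c * Real.cosh y) * Real.cosh y)
      = 2 * ∫ y in Set.Ioi (0:ℝ), Real.exp (-c * Real.cosh y) * Real.cosh y := by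
  have h : (fun y : ℝ => Real.exp (-c * Real.cosh y) * Real.cosh y)
      = fun y : ℝ => Real.exp (-c * Real.cosh |y|) * Real.cosh |y| := by
    funext y
    rw [Real.cosh_abs]
  have h2 := integral_comp_abs (f := fun y => Real.exp (-c * Real.cosh y) * Real.cosh y)
  simp only [Real.cosh_abs] at h2
  exact h2


/-- Stationary phase expansion of the oscillating integral `∫ e^{−c cosh y} cosh y dy`
(the derivative of the mirror oscillatory integral of ℙ¹ with respect to the Kähler
parameter) through the critical point `P₂`. -/
theorem stationary_phase_expansion_derivative (N : ℕ) :
    (fun c : ℝ =>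
        (∫ y : ℝ, Real.exp (-c * Real.cosh y) * Real.cosh y) -
          Real.sqrt (2 * Real.pi / c) * Real.exp (-c) *
            ∑ n ∈ Finset.range (N + 1),
              (-1 : ℝ) ^ n * (oddDoubleFactorial n) ^ 2 /
                ((Nat.factorial n : ℝ) * 8 ^ n * c ^ n) *
                (1 + (2 * (n : ℝ) + 1) / (2 * c))) =O[atTop]
      fun c : ℝ => Real.exp (-c) * c ^ (-(N : ℝ) - 3 / 2) := by
  rw [Asymptotics.isBigO_iff]
  refine ⟨4 * Real.Gamma (((N+1:ℕ):ℝ) + 1/2)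
    + Real.sqrt 2 * Real.sqrt Real.pi * (|Acoef N| * (2*(N:ℝ)+1) / 2), ?_⟩
  filter_upwards [eventually_ge_atTop (1:ℝ)] with c hc1
  have hc : (0:ℝ) < c := lt_of_lt_of_le one_pos hc1
  have hcne : c ≠ 0 := hc.ne'
  have hinvc : (0:ℝ) < 1/c := by positivity
  obtain ⟨E, hEeq, hEbd⟩ := watson N hc
  set u : ℝ := Real.sqrt (1/c) with hu
  have hu' : u = (1/c) ^ ((1:ℝ)/2) := by rw [hu, Real.sqrt_eq_rpow]
  have hupos : 0 < u := Real.sqrt_pos.mpr hinvc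
  have hI : (∫ y : ℝ, Real.exp (-c * Real.cosh y) * Real.cosh y)
      = 2 * (Real.exp (-c) * ((∑ k ∈ Finset.range (N+1),
          bc k * ((1/c) ^ ((k:ℝ) + 1/2) * Real.Gamma ((k:ℝ)+1/2))) + E)) := by
    rw [even_step, subst, MeasureTheory.integral_const_mul, hEeq]
  have hpow : ∀ k : ℕ, (1/c) ^ ((k:ℝ) + 1/2) = (1/c)^k * u := by
    intro k
    rw [hu', ← Real.rpow_natCast (1/c) k, ← Real.rpow_add hinvc]
  have hsum : (∑ k ∈ Finset.range (N+1),
        bc k * ((1/c) ^ ((k:ℝ) + 1/2) * Real.Gamma ((k:ℝ)+1/2)))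
      = (∑ k ∈ Finset.range (N+1), bc k * (Real.Gamma ((k:ℝ)+1/2) * (1/c)^k)) * u := by
    rw [Finset.sum_mul]
    apply Finset.sum_congr rfl
    intro k _
    rw [hpow k]; ring
  have hstmt : ∑ n ∈ Finset.range (N+1),
        (-1:ℝ)^n * (oddDoubleFactorial n)^2 / ((Nat.factorial n : ℝ) * 8^n * c^n)
          * (1 + (2*(n:ℝ)+1)/(2*c))
      = ∑ n ∈ Finset.range (N+1), Acoef n / c^n * (1 + (2*(n:ℝ)+1)/(2*c)) := by
    apply Finset.sum_congr rfl
    intro n _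
    rw [Acoef, div_div]
  have hsq : Real.sqrt (2 * Real.pi / c) = Real.sqrt 2 * Real.sqrt Real.pi * u := by
    rw [hu, div_eq_mul_one_div (2*Real.pi) c, Real.sqrt_mul (by positivity),
      Real.sqrt_mul (by norm_num : (0:ℝ) ≤ 2)]
  set S : ℝ := ∑ k ∈ Finset.range (N+1), bc k * (Real.Gamma ((k:ℝ)+1/2) * (1/c)^k) with hS
  have hmain : Real.sqrt (2 * Real.pi / c) * Real.exp (-c) *
        ∑ n ∈ Finset.range (N+1),
          (-1:ℝ)^n * (oddDoubleFactorial n)^2 / ((Nat.factorial n : ℝ) * 8^n * c^n)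
            * (1 + (2*(n:ℝ)+1)/(2*c))
      = 2 * (Real.exp (-c) * (S * u))
        + Real.exp (-c) * (Real.sqrt 2 * Real.sqrt Real.pi *
            (Acoef N * (2*(N:ℝ)+1) / (2*c^(N+1))) * u) := by
    rw [hstmt, hsq]
    have hid := sum_id N hc
    calc Real.sqrt 2 * Real.sqrt Real.pi * u * Real.exp (-c) *
          ∑ n ∈ Finset.range (N+1), Acoef n / c^n * (1 + (2*(n:ℝ)+1)/(2*c))
        = (Real.sqrt 2 * Real.sqrt Real.pi *
            ∑ n ∈ Finset.range (N+1), Acoef n / c^n * (1 + (2*(n:ℝ)+1)/(2*c)))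
            * (u * Real.exp (-c)) := by ring
      _ = (2 * S + Real.sqrt 2 * Real.sqrt Real.pi *
            (Acoef N * (2*(N:ℝ)+1) / (2 * c^(N+1)))) * (u * Real.exp (-c)) := by rw [hid]
      _ = 2 * (Real.exp (-c) * (S * u))
          + Real.exp (-c) * (Real.sqrt 2 * Real.sqrt Real.pi *
              (Acoef N * (2*(N:ℝ)+1) / (2*c^(N+1))) * u) := by ring
  rw [hI, hsum, hmain]
  have hrw1 : (1/c) ^ (((N+1:ℕ):ℝ) + 1/2) = c ^ (-(N:ℝ) - 3/2) := by
    rw [one_div, Real.inv_rpow hc.le, ← Real.rpow_neg hc.le]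
    congr 1
    push_cast
    ring
  have hrw2 : 1/c^(N+1) * u = c ^ (-(N:ℝ) - 3/2) := by
    rw [show (1:ℝ)/c^(N+1) = (1/c)^(N+1) by rw [div_pow, one_pow], hu',
      ← Real.rpow_natCast (1/c) (N+1), ← Real.rpow_add hinvc]
    exact hrw1
  have hP : 0 < Real.exp (-c) * c ^ (-(N:ℝ) - 3/2) :=
    mul_pos (Real.exp_pos _) (Real.rpow_pos_of_pos hc _)
  have hdiff : 2 * (Real.exp (-c) * (S * u + E))
      - (2 * (Real.exp (-c) * (S * u))
        + Real.exp (-c) * (Real.sqrt 2 * Real.sqrt Real.pi *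
            (Acoef N * (2*(N:ℝ)+1) / (2*c^(N+1))) * u))
      = 2 * Real.exp (-c) * E
        - Real.exp (-c) * (Real.sqrt 2 * Real.sqrt Real.pi *
            (Acoef N * (2*(N:ℝ)+1) / (2*c^(N+1))) * u) := by ring
  rw [hdiff]
  have hb1 : ‖2 * Real.exp (-c) * E‖
      ≤ 4 * Real.Gamma (((N+1:ℕ):ℝ) + 1/2) * (Real.exp (-c) * c ^ (-(N:ℝ) - 3/2)) := by
    rw [Real.norm_eq_abs, abs_mul, abs_mul, abs_two, abs_of_pos (Real.exp_pos _)]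
    calc 2 * Real.exp (-c) * |E|
        ≤ 2 * Real.exp (-c) * (2 * ((1/c) ^ (((N+1:ℕ):ℝ) + 1/2)
            * Real.Gamma (((N+1:ℕ):ℝ) + 1/2))) := by
          apply mul_le_mul_of_nonneg_left hEbd (by positivity)
      _ = 4 * Real.Gamma (((N+1:ℕ):ℝ) + 1/2) * (Real.exp (-c) * c ^ (-(N:ℝ) - 3/2)) := by
          rw [hrw1]; ring
  have hb2 : ‖Real.exp (-c) * (Real.sqrt 2 * Real.sqrt Real.pi *
        (Acoef N * (2*(N:ℝ)+1) / (2*c^(N+1))) * u)‖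
      = Real.sqrt 2 * Real.sqrt Real.pi * (|Acoef N| * (2*(N:ℝ)+1) / 2)
          * (Real.exp (-c) * c ^ (-(N:ℝ) - 3/2)) := by
    have h2N : (0:ℝ) < 2*(N:ℝ)+1 := by positivity
    have hcp : (0:ℝ) < 2*c^(N+1) := by positivity
    rw [Real.norm_eq_abs, abs_mul, abs_mul, abs_mul, abs_div, abs_mul,
      abs_of_pos (Real.exp_pos _), abs_of_pos hupos, abs_of_nonneg (Real.sqrt_nonneg (2:ℝ)),
      abs_of_nonneg (Real.sqrt_nonneg Real.pi), abs_of_pos hcp, abs_mul (Acoef N),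
      abs_of_pos h2N]
    rw [← hrw2]
    ring
  calc ‖2 * Real.exp (-c) * E
        - Real.exp (-c) * (Real.sqrt 2 * Real.sqrt Real.pi *
            (Acoef N * (2*(N:ℝ)+1) / (2*c^(N+1))) * u)‖
      ≤ ‖2 * Real.exp (-c) * E‖
        + ‖Real.exp (-c) * (Real.sqrt 2 * Real.sqrt Real.pi *
            (Acoef N * (2*(N:ℝ)+1) / (2*c^(N+1))) * u)‖ := norm_sub_le _ _
    _ ≤ 4 * Real.Gamma (((N+1:ℕ):ℝ) + 1/2) * (Real.exp (-c) * c ^ (-(N:ℝ) - 3/2))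
        + Real.sqrt 2 * Real.sqrt Real.pi * (|Acoef N| * (2*(N:ℝ)+1) / 2)
          * (Real.exp (-c) * c ^ (-(N:ℝ) - 3/2)) := by
        exact add_le_add hb1 (le_of_eq hb2)
    _ = (4 * Real.Gamma (((N+1:ℕ):ℝ) + 1/2)
          + Real.sqrt 2 * Real.sqrt Real.pi * (|Acoef N| * (2*(N:ℝ)+1) / 2))
          * ‖Real.exp (-c) * c ^ (-(N:ℝ) - 3/2)‖ := by
        rw [Real.norm_eq_abs, abs_of_pos hP]
        ring
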